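/- Let η₁ ~ Beta(a₁,a₂), η₂ ~ Beta(b₁,b₂), η₃ ~ Beta(a₁+a₂, b₁+b₂) be independent, with all parameters positive. Then π = η₃η₁ + (1-η₃)η₂ has distribution Beta(a₁+b₁, a₂+b₂). -/

import Mathlib

open MeasureTheory Set

/-- The Beta(a, b) distribution on ℝ, with density `x^(a-1) (1-x)^(b-1) / B(a,b)` on `(0,1)`,
where `B(a,b) = Γ(a)Γ(b)/Γ(a+b)`. -/
noncomputable def betaMeasure (a b : ℝ) : Measure ℝ :=
  volume.withDensity ((Ioo (0:ℝ) 1).indicator fun x =>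
    ENNReal.ofReal (x ^ (a - 1) * (1 - x) ^ (b - 1) *
      (Real.Gamma (a + b) / (Real.Gamma a * Real.Gamma b))))

open scoped ENNReal NNReal

private lemma beta_integrableOn {a b : ℝ} (ha : 0 < a) (hb : 0 < b) :
    IntegrableOn (fun x : ℝ => x ^ (a-1) * (1-x) ^ (b-1)) (Ioo 0 1) volume := by
  have h := Complex.betaIntegral_convergent (u := a) (v := b) (by simpa using ha) (by simpa using hb)
  have h2 : IntegrableOn (fun x : ℝ => (x:ℂ) ^ ((a:ℂ)-1) * ((1:ℂ)-x) ^ ((b:ℂ)-1)) (Ioo 0 1)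
      volume := ((intervalIntegrable_iff_integrableOn_Ioc_of_le zero_le_one).mp h).mono_set
    Ioo_subset_Ioc_self
  have h3 : IntegrableOn (fun x : ℝ => ((x:ℂ) ^ ((a:ℂ)-1) * ((1:ℂ)-x) ^ ((b:ℂ)-1)).re) (Ioo 0 1)
      volume := h2.re
  refine h3.congr_fun (fun x hx => ?_) measurableSet_Ioo
  obtain ⟨hx0, hx1⟩ := hx
  beta_reduce
  rw [show ((1:ℂ) - x) = ((1 - x : ℝ) : ℂ) by push_cast; ring,
    show ((a:ℂ)-1) = ((a-1 : ℝ):ℂ) by push_cast; ring,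
    show ((b:ℂ)-1) = ((b-1 : ℝ):ℂ) by push_cast; ring,
    ← Complex.ofReal_cpow hx0.le, ← Complex.ofReal_cpow (by linarith), ← Complex.ofReal_mul,
    Complex.ofReal_re]

private lemma beta_integral_eq {a b : ℝ} (ha : 0 < a) (hb : 0 < b) :
    ∫ x in Ioo (0:ℝ) 1, x ^ (a-1) * (1-x) ^ (b-1)
      = Real.Gamma a * Real.Gamma b / Real.Gamma (a+b) := by
  have hG : Real.Gamma (a+b) ≠ 0 := (Real.Gamma_pos_of_pos (by linarith)).ne'
  have key : (∫ x in Ioo (0:ℝ) 1, ((x ^ (a-1) * (1-x) ^ (b-1) : ℝ) : ℂ))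
      = ((Real.Gamma a * Real.Gamma b / Real.Gamma (a+b) : ℝ) : ℂ) := by
    have h1 : ∫ x in Ioo (0:ℝ) 1, ((x ^ (a-1) * (1-x) ^ (b-1) : ℝ) : ℂ)
        = ∫ x in Ioo (0:ℝ) 1, (x:ℂ) ^ ((a:ℂ)-1) * ((1:ℂ)-x) ^ ((b:ℂ)-1) := by
      refine setIntegral_congr_fun measurableSet_Ioo (fun x hx => ?_)
      obtain ⟨hx0, hx1⟩ := hx
      rw [show ((1:ℂ) - x) = ((1 - x : ℝ) : ℂ) by push_cast; ring,
        show ((a:ℂ)-1) = ((a-1 : ℝ):ℂ) by push_cast; ring,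
        show ((b:ℂ)-1) = ((b-1 : ℝ):ℂ) by push_cast; ring,
        ← Complex.ofReal_cpow hx0.le, ← Complex.ofReal_cpow (by linarith),
        ← Complex.ofReal_mul]
    rw [h1, ← integral_Ioc_eq_integral_Ioo,
      ← intervalIntegral.integral_of_le zero_le_one]
    have h2 := Complex.Gamma_mul_Gamma_eq_betaIntegral (s := a) (t := b)
      (by simpa using ha) (by simpa using hb)
    have h3 : Complex.betaIntegral a b
        = Complex.Gamma a * Complex.Gamma b / Complex.Gamma ((a:ℂ)+b) := by
      rw [eq_div_iff, mul_comm, ← h2]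
      rw [show ((a:ℂ)+b) = ((a+b:ℝ):ℂ) by push_cast; ring, Complex.Gamma_ofReal]
      exact_mod_cast hG
    have h4 : (Complex.betaIntegral a b) = ∫ x in (0:ℝ)..1,
        (x:ℂ) ^ ((a:ℂ)-1) * ((1:ℂ)-x) ^ ((b:ℂ)-1) := rfl
    rw [← h4, h3, show ((a:ℂ)+b) = ((a+b:ℝ):ℂ) by push_cast; ring, Complex.Gamma_ofReal,
      Complex.Gamma_ofReal, Complex.Gamma_ofReal]
    push_cast
    ring
  have hco := integral_ofReal (𝕜 := ℂ) (f := fun x => x ^ (a-1) * (1-x) ^ (b-1))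
    (μ := volume.restrict (Ioo 0 1))
  exact RCLike.ofReal_inj.mp (hco.symm.trans key)

noncomputable def P (k : ℕ) (x : ℝ) : ℝ := (ascPochhammer ℝ k).eval x
private lemma P_zero (x : ℝ) : P 0 x = 1 := by simp [P]
private lemma P_succ (k : ℕ) (x : ℝ) : P (k+1) x = P k x * (x + k) := by
  simp [P, ascPochhammer_succ_eval]
private lemma P_pos {x : ℝ} (hx : 0 < x) (k : ℕ) : 0 < P k x := ascPochhammer_pos k x hx

private lemma Gamma_add_nat {a : ℝ} (ha : 0 < a) (n : ℕ) :
    Real.Gamma (a + n) = P n a * Real.Gamma a := by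
  induction n with
  | zero => simp [P_zero]
  | succ n ih =>
    have h : a + ((n:ℕ)+1 : ℕ) = (a + n) + 1 := by push_cast; ring
    have hpos : (0:ℝ) < a + n := by positivity
    rw [h, Real.Gamma_add_one hpos.ne', ih, P_succ]
    ring

private lemma dens_measurable (a b : ℝ) : Measurable ((Ioo (0:ℝ) 1).indicator fun x =>
    ENNReal.ofReal (x ^ (a - 1) * (1 - x) ^ (b - 1) *
      (Real.Gamma (a + b) / (Real.Gamma a * Real.Gamma b)))) := by
  refine Measurable.indicator ?_ measurableSet_Ioo
  fun_prop

private lemma lintegral_betaMeasure (a b : ℝ) {f : ℝ → ℝ≥0∞} (hf : Measurable f) :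
    ∫⁻ x, f x ∂(betaMeasure a b) = ∫⁻ x in Ioo (0:ℝ) 1,
      ENNReal.ofReal (x ^ (a-1) * (1-x) ^ (b-1) *
        (Real.Gamma (a+b) / (Real.Gamma a * Real.Gamma b))) * f x := by
  rw [betaMeasure, lintegral_withDensity_eq_lintegral_mul _ (dens_measurable a b) hf,
    ← lintegral_indicator measurableSet_Ioo]
  refine lintegral_congr fun x => ?_
  by_cases hx : x ∈ Ioo (0:ℝ) 1
  · simp [Set.indicator_of_mem hx]
  · simp [Set.indicator_of_notMem hx]

private lemma betaMeasure_moment {a b : ℝ} (ha : 0 < a) (hb : 0 < b) (k m : ℕ) :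
    ∫⁻ x, ENNReal.ofReal (x ^ k * (1-x) ^ m) ∂(betaMeasure a b)
      = ENNReal.ofReal (P k a * P m b / P (k+m) (a+b)) := by
  have hab : 0 < a + b := by linarith
  have hGa := Real.Gamma_pos_of_pos ha
  have hGb := Real.Gamma_pos_of_pos hb
  have hGab := Real.Gamma_pos_of_pos hab
  have hC : 0 < Real.Gamma (a+b) / (Real.Gamma a * Real.Gamma b) := by positivity
  have hak : 0 < a + (k:ℝ) := by positivity
  have hbm : 0 < b + (m:ℝ) := by positivity
  have hf : Measurable fun x : ℝ => ENNReal.ofReal (x ^ k * (1-x) ^ m) := by fun_prop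
  rw [lintegral_betaMeasure a b hf]
  have step1 : ∫⁻ x in Ioo (0:ℝ) 1,
      ENNReal.ofReal (x ^ (a-1) * (1-x) ^ (b-1) *
        (Real.Gamma (a+b) / (Real.Gamma a * Real.Gamma b))) * ENNReal.ofReal (x ^ k * (1-x) ^ m)
      = ∫⁻ x in Ioo (0:ℝ) 1,
        ENNReal.ofReal (x ^ ((a+(k:ℝ))-1) * (1-x) ^ ((b+(m:ℝ))-1))
          * ENNReal.ofReal (Real.Gamma (a+b) / (Real.Gamma a * Real.Gamma b)) := by
    refine setLIntegral_congr_fun measurableSet_Ioo (fun x hx => ?_)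
    obtain ⟨hx0, hx1⟩ := hx
    have h1x : (0:ℝ) < 1 - x := by linarith
    rw [← ENNReal.ofReal_mul (by positivity), ← ENNReal.ofReal_mul (by positivity)]
    congr 1
    rw [show (a+(k:ℝ))-1 = (a-1)+(k:ℝ) by ring, show (b+(m:ℝ))-1 = (b-1)+(m:ℝ) by ring,
      Real.rpow_add hx0, Real.rpow_add h1x, Real.rpow_natCast, Real.rpow_natCast]
    ring
  rw [step1, lintegral_mul_const _ (by fun_prop),
    ← ofReal_integral_eq_lintegral_ofReal (beta_integrableOn hak hbm)
      (by filter_upwards [ae_restrict_mem measurableSet_Ioo] with x hx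
          obtain ⟨h0, h2⟩ := hx
          have h1 : (0:ℝ) < 1 - x := by linarith
          positivity),
    beta_integral_eq hak hbm, ← ENNReal.ofReal_mul (by positivity)]
  congr 1
  have e3 : a + (k:ℝ) + (b + (m:ℝ)) = (a + b) + ((k+m : ℕ) : ℝ) := by push_cast; ring
  rw [Gamma_add_nat ha k, Gamma_add_nat hb m, e3, Gamma_add_nat hab (k+m)]
  have hP := P_pos hab (k+m)
  field_simp

private lemma betaMeasure_isProb {a b : ℝ} (ha : 0 < a) (hb : 0 < b) :
    IsProbabilityMeasure (betaMeasure a b) := by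
  have h := betaMeasure_moment ha hb 0 0
  norm_num [P_zero] at h
  exact ⟨h⟩

private lemma betaMeasure_compl_Ioo (a b : ℝ) : betaMeasure a b (Ioo 0 1)ᶜ = 0 := by
  rw [betaMeasure, withDensity_apply _ measurableSet_Ioo.compl]
  rw [setLIntegral_congr_fun measurableSet_Ioo.compl
    (fun x (hx : x ∈ (Ioo (0:ℝ) 1)ᶜ) => Set.indicator_of_notMem hx _)]
  simp

private lemma betaMeasure_ae_Ioo (a b : ℝ) : ∀ᵐ x ∂(betaMeasure a b), x ∈ Ioo (0:ℝ) 1 :=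
  mem_ae_iff.mpr (betaMeasure_compl_Ioo a b)

private lemma asc_vdm (x y : ℝ) : ∀ n : ℕ,
    ∑ k ∈ Finset.range (n+1), (n.choose k : ℝ) * P k x * P (n-k) y = P n (x+y) := by
  intro n
  induction n with
  | zero => simp [P_zero]
  | succ n ih =>
    rw [Finset.sum_range_succ']
    have h1 : ∀ k ∈ Finset.range (n+1), ((n+1).choose (k+1) : ℝ) * P (k+1) x * P (n+1-(k+1)) y
        = (n.choose k : ℝ) * P (k+1) x * P (n-k) y
          + (n.choose (k+1) : ℝ) * P (k+1) x * P (n-k) y := by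
      intro k _
      rw [show n+1-(k+1) = n - k from Nat.succ_sub_succ n k, Nat.choose_succ_succ]
      push_cast
      ring
    rw [Finset.sum_congr rfl h1, Finset.sum_add_distrib]
    -- second sum plus tail term
    have h2 : (∑ k ∈ Finset.range (n+1), (n.choose (k+1) : ℝ) * P (k+1) x * P (n-k) y)
        + ((n+1).choose 0 : ℝ) * P 0 x * P (n+1-0) y
        = ∑ k ∈ Finset.range (n+1), (n.choose k : ℝ) * P k x * (P (n-k) y * (y + (n-k : ℕ))) := by
      have := Finset.sum_range_succ' (fun j => (n.choose j : ℝ) * P j x * P (n+1-j) y) (n+1)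
      simp only [Nat.succ_sub_succ] at this
      rw [show ∑ j ∈ Finset.range (n+1+1), (n.choose j : ℝ) * P j x * P (n+1-j) y
          = ∑ j ∈ Finset.range (n+1), (n.choose j : ℝ) * P j x * P (n+1-j) y by
        rw [Finset.sum_range_succ]; simp] at this
      calc (∑ k ∈ Finset.range (n+1), (n.choose (k+1) : ℝ) * P (k+1) x * P (n-k) y)
            + ((n+1).choose 0 : ℝ) * P 0 x * P (n+1-0) y
          = ∑ j ∈ Finset.range (n+1), (n.choose j : ℝ) * P j x * P (n+1-j) y := by
            simp only [Nat.choose_zero_right] at this ⊢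
            exact this.symm
        _ = _ := by
            refine Finset.sum_congr rfl fun k hk => ?_
            have hk' : k ≤ n := Nat.lt_succ_iff.mp (Finset.mem_range.mp hk)
            rw [show n+1-k = (n-k)+1 from by omega, P_succ]
            try ring
    rw [add_assoc, h2, ← Finset.sum_add_distrib]
    have h3 : ∀ k ∈ Finset.range (n+1),
        (n.choose k : ℝ) * P (k+1) x * P (n-k) y
          + (n.choose k : ℝ) * P k x * (P (n-k) y * (y + (n-k : ℕ)))
        = ((n.choose k : ℝ) * P k x * P (n-k) y) * (x + y + n) := by
      intro k hk
      have hk' : k ≤ n := Nat.lt_succ_iff.mp (Finset.mem_range.mp hk)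
      rw [P_succ, Nat.cast_sub hk']
      ring
    rw [Finset.sum_congr rfl h3, ← Finset.sum_mul, ih, P_succ]



private lemma integrable_of_cont {μ : Measure ℝ} [IsProbabilityMeasure μ]
    (hμ : μ.restrict (Icc (0:ℝ) 1) = μ) (g : ℝ → ℝ) (hg : Continuous g) : Integrable g μ := by
  rw [← hμ]
  exact hg.continuousOn.integrableOn_compact isCompact_Icc

private lemma ext_of_moments {μ ν : Measure ℝ} [IsProbabilityMeasure μ] [IsProbabilityMeasure ν]
    (hμ : μ (Icc (0:ℝ) 1)ᶜ = 0) (hν : ν (Icc (0:ℝ) 1)ᶜ = 0)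
    (h : ∀ n : ℕ, ∫⁻ x, ENNReal.ofReal (x ^ n) ∂μ = ∫⁻ x, ENNReal.ofReal (x ^ n) ∂ν) :
    μ = ν := by
  have hμr : μ.restrict (Icc (0:ℝ) 1) = μ :=
    Measure.restrict_eq_self_of_ae_mem (mem_ae_iff.mpr hμ)
  have hνr : ν.restrict (Icc (0:ℝ) 1) = ν :=
    Measure.restrict_eq_self_of_ae_mem (mem_ae_iff.mpr hν)
  -- Bochner moments agree
  have hb : ∀ n : ℕ, ∫ x, x ^ n ∂μ = ∫ x, x ^ n ∂ν := by
    intro n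
    rw [integral_eq_lintegral_of_nonneg_ae ?_ (continuous_pow n).aestronglyMeasurable,
      integral_eq_lintegral_of_nonneg_ae ?_ (continuous_pow n).aestronglyMeasurable, h n]
    · filter_upwards [mem_ae_iff.mpr hν] with x hx using pow_nonneg hx.1 n
    · filter_upwards [mem_ae_iff.mpr hμ] with x hx using pow_nonneg hx.1 n
  -- polynomial integrals agree
  have hp : ∀ p : Polynomial ℝ, ∫ x, p.eval x ∂μ = ∫ x, p.eval x ∂ν := by
    intro p
    have hrepr : ∀ x : ℝ, p.eval x = ∑ i ∈ Finset.range (p.natDegree + 1), p.coeff i * x ^ i :=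
      fun x => Polynomial.eval_eq_sum_range x
    simp_rw [hrepr]
    rw [integral_finset_sum _ (fun i _ =>
        (integrable_of_cont hμr _ (continuous_pow i)).const_mul _),
      integral_finset_sum _ (fun i _ =>
        (integrable_of_cont hνr _ (continuous_pow i)).const_mul _)]
    refine Finset.sum_congr rfl fun i _ => ?_
    rw [integral_const_mul, integral_const_mul, hb i]
  -- continuous integrals agree
  have hcont : ∀ g : C(ℝ, ℝ), ∫ x, g x ∂μ = ∫ x, g x ∂ν := by
    intro g
    by_contra hne
    set A := ∫ x, g x ∂μ with hA
    set B := ∫ x, g x ∂ν with hB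
    have hd : 0 < |A - B| := abs_pos.mpr (sub_ne_zero.mpr hne)
    set ε : ℝ := |A - B| / 3 with hε
    have hεpos : 0 < ε := by positivity
    -- polynomial approximation on [0,1]
    obtain ⟨q, hq⟩ : ∃ q : Polynomial ℝ, ∀ x ∈ Icc (0:ℝ) 1, |g x - q.eval x| ≤ ε := by
      have hdense := polynomialFunctions_closure_eq_top 0 1
      have hmem : g.restrict (Icc (0:ℝ) 1) ∈
          (polynomialFunctions (Icc (0:ℝ) 1)).topologicalClosure := by
        rw [hdense]; trivial
      rw [← Subalgebra.mem_toSubmodule] at hmem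
      have hmem2 : g.restrict (Icc (0:ℝ) 1) ∈
          closure (polynomialFunctions (Icc (0:ℝ) 1) : Set C(Icc (0:ℝ) 1, ℝ)) := by
        exact hmem
      rw [Metric.mem_closure_iff] at hmem2
      obtain ⟨q', hq'mem, hq'dist⟩ := hmem2 ε hεpos
      rw [polynomialFunctions_coe] at hq'mem
      obtain ⟨q, rfl⟩ := hq'mem
      refine ⟨q, fun x hx => ?_⟩
      have := ContinuousMap.dist_apply_le_dist (f := g.restrict (Icc (0:ℝ) 1))
        (g := Polynomial.toContinuousMapOnAlgHom (Icc (0:ℝ) 1) q) ⟨x, hx⟩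
      rw [Real.dist_eq] at this
      calc |g x - q.eval x| ≤ dist (g.restrict (Icc (0:ℝ) 1))
            (Polynomial.toContinuousMapOnAlgHom (Icc (0:ℝ) 1) q) := this
        _ ≤ ε := hq'dist.le
    have key : ∀ (ρ : Measure ℝ) [IsProbabilityMeasure ρ], ρ.restrict (Icc (0:ℝ) 1) = ρ →
        |∫ x, g x ∂ρ - ∫ x, q.eval x ∂ρ| ≤ ε := by
      intro ρ _ hρr
      rw [← integral_sub (integrable_of_cont hρr _ g.continuous)
        (integrable_of_cont hρr _ (Polynomial.continuous q))]
      rw [← hρr]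
      have hb1 : ‖∫ x in Icc (0:ℝ) 1, (g x - q.eval x) ∂ρ‖
          ≤ ε * (ρ (Icc (0:ℝ) 1)).toReal := by
        refine norm_setIntegral_le_of_norm_le_const (measure_lt_top ρ _)
          (fun x hx => by rw [Real.norm_eq_abs]; exact hq x hx)
      have hb2 : (ρ (Icc (0:ℝ) 1)).toReal ≤ 1 :=
        ENNReal.toReal_le_of_le_ofReal zero_le_one (by simpa using prob_le_one)
      calc |∫ x in Icc (0:ℝ) 1, (g x - q.eval x) ∂ρ|
          ≤ ε * (ρ (Icc (0:ℝ) 1)).toReal := hb1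
        _ ≤ ε * 1 := by nlinarith
        _ = ε := mul_one ε
    have k1 := key μ hμr
    have k2 := key ν hνr
    have k3 := hp q
    have : |A - B| ≤ 2 * ε := by
      calc |A - B| = |(A - ∫ x, q.eval x ∂μ) + ((∫ x, q.eval x ∂ν) - B) +
            ((∫ x, q.eval x ∂μ) - (∫ x, q.eval x ∂ν))| := by ring_nf
        _ ≤ _ := by
            rw [k3, sub_self, add_zero]
            calc |(A - ∫ x, q.eval x ∂ν) + ((∫ x, q.eval x ∂ν) - B)| ≤ _ := abs_add_le _ _
              _ ≤ 2 * ε := by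
                  rw [k3] at k1
                  have : |(∫ x, q.eval x ∂ν) - B| = |B - (∫ x, q.eval x ∂ν)| := abs_sub_comm _ _
                  rw [this]
                  linarith [k1, k2]
      -- done
    rw [hε] at this
    linarith
  -- conclude via bounded continuous functions
  refine ext_of_forall_lintegral_eq_of_IsFiniteMeasure fun f => ?_
  have hgc : Continuous fun x : ℝ => ((f x : ℝ)) := NNReal.continuous_coe.comp f.continuous
  rw [lintegral_coe_eq_integral _ (integrable_of_cont hμr _ hgc),
    lintegral_coe_eq_integral _ (integrable_of_cont hνr _ hgc)]
  exact congrArg ENNReal.ofReal (hcont ⟨_, hgc⟩)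

private lemma betaMeasure_moment_pow {a b : ℝ} (ha : 0 < a) (hb : 0 < b) (k : ℕ) :
    ∫⁻ x, ENNReal.ofReal (x ^ k) ∂(betaMeasure a b)
      = ENNReal.ofReal (P k a / P k (a+b)) := by
  have := betaMeasure_moment ha hb k 0
  simpa [P_zero] using this

/-- If `η₁ ~ Beta(a₁,a₂)`, `η₂ ~ Beta(b₁,b₂)`, `η₃ ~ Beta(a₁+a₂, b₁+b₂)` are independent,
then `π = η₃η₁ + (1-η₃)η₂ ~ Beta(a₁+b₁, a₂+b₂)`. -/
theorem beta_convex_combination (a₁ a₂ b₁ b₂ : ℝ)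
    (ha₁ : 0 < a₁) (ha₂ : 0 < a₂) (hb₁ : 0 < b₁) (hb₂ : 0 < b₂) :
    Measure.map (fun p : ℝ × ℝ × ℝ => p.2.2 * p.1 + (1 - p.2.2) * p.2.1)
        ((betaMeasure a₁ a₂).prod ((betaMeasure b₁ b₂).prod (betaMeasure (a₁ + a₂) (b₁ + b₂))))
      = betaMeasure (a₁ + b₁) (a₂ + b₂) := by
  have ha12 : 0 < a₁ + a₂ := by linarith
  have hb12 : 0 < b₁ + b₂ := by linarith
  have hab1 : 0 < a₁ + b₁ := by linarith
  have hab2 : 0 < a₂ + b₂ := by linarith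
  haveI i1 := betaMeasure_isProb ha₁ ha₂
  haveI i2 := betaMeasure_isProb hb₁ hb₂
  haveI i3 := betaMeasure_isProb ha12 hb12
  haveI i4 := betaMeasure_isProb hab1 hab2
  set T : ℝ × ℝ × ℝ → ℝ := fun p => p.2.2 * p.1 + (1 - p.2.2) * p.2.1 with hT_def
  have hT : Measurable T := by fun_prop
  set μ : Measure (ℝ × ℝ × ℝ) :=
    (betaMeasure a₁ a₂).prod ((betaMeasure b₁ b₂).prod (betaMeasure (a₁ + a₂) (b₁ + b₂)))
    with hμ_def
  haveI : IsProbabilityMeasure μ := by rw [hμ_def]; infer_instance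
  haveI : IsProbabilityMeasure (Measure.map T μ) := Measure.isProbabilityMeasure_map hT.aemeasurable
  -- the support box
  set box : Set (ℝ × ℝ × ℝ) := (Set.Ioo (0:ℝ) 1) ×ˢ ((Set.Ioo (0:ℝ) 1) ×ˢ (Set.Ioo (0:ℝ) 1)) with hbox_def
  have hbox_meas : MeasurableSet box :=
    (measurableSet_Ioo.prod (measurableSet_Ioo.prod measurableSet_Ioo))
  have hbox_one : μ box = 1 := by
    rw [hμ_def, hbox_def, Measure.prod_prod, Measure.prod_prod]
    rw [prob_compl_eq_zero_iff measurableSet_Ioo |>.mp (betaMeasure_compl_Ioo a₁ a₂),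
      prob_compl_eq_zero_iff measurableSet_Ioo |>.mp (betaMeasure_compl_Ioo b₁ b₂),
      prob_compl_eq_zero_iff measurableSet_Ioo |>.mp (betaMeasure_compl_Ioo (a₁+a₂) (b₁+b₂))]
    simp
  have hbox_compl : μ boxᶜ = 0 := (prob_compl_eq_zero_iff hbox_meas).mpr hbox_one
  -- support conditions
  have hsupp_map : (Measure.map T μ) (Icc (0:ℝ) 1)ᶜ = 0 := by
    rw [Measure.map_apply hT measurableSet_Icc.compl]
    refine measure_mono_null (fun p hp => ?_) hbox_compl
    simp only [Set.mem_preimage, Set.mem_compl_iff] at hp ⊢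
    intro hpbox
    obtain ⟨⟨hx0, hx1⟩, ⟨hy0, hy1⟩, ⟨ht0, ht1⟩⟩ := hpbox
    refine hp ⟨?_, ?_⟩
    · show (0:ℝ) ≤ p.2.2 * p.1 + (1 - p.2.2) * p.2.1
      nlinarith
    · show p.2.2 * p.1 + (1 - p.2.2) * p.2.1 ≤ (1:ℝ)
      nlinarith
  have hsupp_tgt : (betaMeasure (a₁+b₁) (a₂+b₂)) (Icc (0:ℝ) 1)ᶜ = 0 :=
    measure_mono_null (compl_subset_compl.mpr Ioo_subset_Icc_self)
      (betaMeasure_compl_Ioo _ _)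
  -- moment computation
  refine ext_of_moments hsupp_map hsupp_tgt fun n => ?_
  rw [lintegral_map (by fun_prop) hT]
  rw [betaMeasure_moment_pow hab1 hab2 n]
  -- expand the power
  have step1 : ∫⁻ p, ENNReal.ofReal (T p ^ n) ∂μ
      = ∫⁻ p, ∑ k ∈ Finset.range (n+1), ENNReal.ofReal ((n.choose k : ℝ))
          * (ENNReal.ofReal (p.1 ^ k) * (ENNReal.ofReal (p.2.1 ^ (n-k))
            * ENNReal.ofReal (p.2.2 ^ k * (1-p.2.2) ^ (n-k)))) ∂μ := by
    refine lintegral_congr_ae ?_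
    filter_upwards [mem_ae_iff.mpr hbox_compl] with p hp
    obtain ⟨⟨hx0, hx1⟩, ⟨hy0, hy1⟩, ⟨ht0, ht1⟩⟩ := hp
    have h1t : (0:ℝ) ≤ 1 - p.2.2 := by linarith
    rw [hT_def]
    simp only []
    rw [add_pow]
    rw [ENNReal.ofReal_sum_of_nonneg (fun k _ => by positivity)]
    refine Finset.sum_congr rfl fun k _ => ?_
    rw [← ENNReal.ofReal_mul (by positivity), ← ENNReal.ofReal_mul (by positivity),
      ← ENNReal.ofReal_mul (by positivity)]
    congr 1
    rw [mul_pow, mul_pow]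
    ring
  rw [step1, lintegral_finset_sum _ (fun k _ => by fun_prop)]
  -- evaluate each term
  have term_eval : ∀ k ∈ Finset.range (n+1),
      ∫⁻ p, ENNReal.ofReal ((n.choose k : ℝ))
          * (ENNReal.ofReal (p.1 ^ k) * (ENNReal.ofReal (p.2.1 ^ (n-k))
            * ENNReal.ofReal (p.2.2 ^ k * (1-p.2.2) ^ (n-k)))) ∂μ
      = ENNReal.ofReal ((n.choose k : ℝ) * ((P k a₁ / P k (a₁+a₂))
          * ((P (n-k) b₁ / P (n-k) (b₁+b₂))
            * (P k (a₁+a₂) * P (n-k) (b₁+b₂) / P (k+(n-k)) ((a₁+a₂)+(b₁+b₂)))))) := by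
    intro k _
    rw [lintegral_const_mul _ (by fun_prop)]
    rw [hμ_def]
    have h2 : ∫⁻ (a : ℝ × ℝ × ℝ), ENNReal.ofReal (a.1 ^ k) *
          (ENNReal.ofReal (a.2.1 ^ (n-k)) * ENNReal.ofReal (a.2.2 ^ k * (1 - a.2.2) ^ (n-k)))
          ∂((betaMeasure a₁ a₂).prod ((betaMeasure b₁ b₂).prod (betaMeasure (a₁+a₂) (b₁+b₂))))
        = (∫⁻ x, ENNReal.ofReal (x ^ k) ∂(betaMeasure a₁ a₂))
          * ∫⁻ q : ℝ × ℝ, ENNReal.ofReal (q.1 ^ (n-k))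
              * ENNReal.ofReal (q.2 ^ k * (1 - q.2) ^ (n-k))
              ∂((betaMeasure b₁ b₂).prod (betaMeasure (a₁+a₂) (b₁+b₂))) :=
      lintegral_prod_mul (f := fun x : ℝ => ENNReal.ofReal (x ^ k))
        (g := fun q : ℝ × ℝ => ENNReal.ofReal (q.1 ^ (n-k))
          * ENNReal.ofReal (q.2 ^ k * (1 - q.2) ^ (n-k))) (by fun_prop) (by fun_prop)
    have h3 : ∫⁻ q : ℝ × ℝ, ENNReal.ofReal (q.1 ^ (n-k))
          * ENNReal.ofReal (q.2 ^ k * (1 - q.2) ^ (n-k))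
          ∂((betaMeasure b₁ b₂).prod (betaMeasure (a₁+a₂) (b₁+b₂)))
        = (∫⁻ y, ENNReal.ofReal (y ^ (n-k)) ∂(betaMeasure b₁ b₂))
          * ∫⁻ t, ENNReal.ofReal (t ^ k * (1 - t) ^ (n-k)) ∂(betaMeasure (a₁+a₂) (b₁+b₂)) :=
      lintegral_prod_mul (f := fun y : ℝ => ENNReal.ofReal (y ^ (n-k)))
        (g := fun t : ℝ => ENNReal.ofReal (t ^ k * (1 - t) ^ (n-k))) (by fun_prop) (by fun_prop)
    rw [h2, h3]
    rw [betaMeasure_moment_pow ha₁ ha₂ k, betaMeasure_moment_pow hb₁ hb₂ (n-k),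
      betaMeasure_moment ha12 hb12 k (n-k)]
    have c1 : 0 ≤ P k a₁ / P k (a₁+a₂) := le_of_lt (div_pos (P_pos ha₁ k) (P_pos ha12 k))
    have c2 : 0 ≤ P (n-k) b₁ / P (n-k) (b₁+b₂) :=
      le_of_lt (div_pos (P_pos hb₁ _) (P_pos hb12 _))
    have c3 : 0 ≤ P k (a₁+a₂) * P (n-k) (b₁+b₂) / P (k+(n-k)) ((a₁+a₂)+(b₁+b₂)) :=
      le_of_lt (div_pos (mul_pos (P_pos ha12 _) (P_pos hb12 _)) (P_pos (by linarith) _))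
    rw [← ENNReal.ofReal_mul c2, ← ENNReal.ofReal_mul c1,
      ← ENNReal.ofReal_mul (Nat.cast_nonneg _)]
  rw [Finset.sum_congr rfl term_eval]
  -- the real identity
  have nonneg_terms : ∀ k ∈ Finset.range (n+1),
      0 ≤ (n.choose k : ℝ) * ((P k a₁ / P k (a₁+a₂))
          * ((P (n-k) b₁ / P (n-k) (b₁+b₂))
            * (P k (a₁+a₂) * P (n-k) (b₁+b₂) / P (k+(n-k)) ((a₁+a₂)+(b₁+b₂))))) := by
    intro k _
    have c1 := (div_pos (P_pos ha₁ k) (P_pos ha12 k)).le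
    have c2 := (div_pos (P_pos hb₁ (n-k)) (P_pos hb12 (n-k))).le
    have c3 := (div_pos (mul_pos (P_pos ha12 k) (P_pos hb12 (n-k)))
      (P_pos (by linarith : (0:ℝ) < (a₁+a₂)+(b₁+b₂)) (k+(n-k)))).le
    positivity
  rw [← ENNReal.ofReal_sum_of_nonneg nonneg_terms]
  congr 1
  have hsum : ∑ k ∈ Finset.range (n+1), (n.choose k : ℝ) * ((P k a₁ / P k (a₁+a₂))
          * ((P (n-k) b₁ / P (n-k) (b₁+b₂))
            * (P k (a₁+a₂) * P (n-k) (b₁+b₂) / P (k+(n-k)) ((a₁+a₂)+(b₁+b₂)))))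
      = ∑ k ∈ Finset.range (n+1), ((n.choose k : ℝ) * P k a₁ * P (n-k) b₁)
          / P n ((a₁+a₂)+(b₁+b₂)) := by
    refine Finset.sum_congr rfl fun k hk => ?_
    have hkn : k ≤ n := Nat.lt_succ_iff.mp (Finset.mem_range.mp hk)
    rw [show k + (n-k) = n from by omega]
    have h1 := (P_pos ha12 k).ne'
    have h2 := (P_pos hb12 (n-k)).ne'
    have h3 := (P_pos (show (0:ℝ) < (a₁+a₂)+(b₁+b₂) by linarith) n).ne'
    field_simp
  rw [hsum, ← Finset.sum_div, asc_vdm a₁ b₁ n]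
  rw [show a₁ + b₁ + (a₂ + b₂) = (a₁+a₂) + (b₁+b₂) by ring]
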